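/- In the N_K=N setting, D_W^{(j|J)} δ(Z,W) = σ(J) (i_{z,w} - i_{w,z}) (Z-W)^{-1-j|N∖J}, where D_W^{(j|J)} = ((-1)^{|J|(|J|+1)/2}/j!) ∂_w^j ∏_{i∈J}(∂_{ζ^i} + ζ^i∂_w), δ(Z,W) = (i_{z,w}-i_{w,z})((θ-ζ)^N/(z-w)), and (Z-W)^{-1-j|N∖J} uses the N_K binomial (z-w-Σθ^iζ^i) expanded in the respective domain. -/

import Mathlib

noncomputable section

/-- The Grassmann algebra on `k` groups of `N` odd generators (e.g. `θ`'s, `ζ`'s, `χ`'s),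
modelled as an exterior algebra. -/
abbrev Gr (k N : ℕ) : Type := ExteriorAlgebra ℂ (Fin k × Fin N → ℂ)

/-- The `i`-th odd generator of the `g`-th group. -/
def gv {k N : ℕ} (g : Fin k) (i : Fin N) : Gr k N :=
  ExteriorAlgebra.ι ℂ (Pi.single (g, i) (1:ℂ))

/-- The odd (left) derivative with respect to the `i`-th generator of group `g`,
realized as contraction in the exterior algebra. -/
def dgv {k N : ℕ} (g : Fin k) (i : Fin N) : Module.End ℂ (Gr k N) :=
  CliffordAlgebra.contractLeft (LinearMap.proj (g, i))

/-- Iterated odd derivative extracting the coefficient of the full top monomial of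
group `g` (applying `∂_1` first, then `∂_2`, etc.). -/
def resG {k N : ℕ} (g : Fin k) : Module.End ℂ (Gr k N) :=
  (((List.finRange N).map (dgv g)).reverse).prod

/-- The reordering sign `σ(I,J)` determined by `θ^I θ^J = σ(I,J) θ^{I∪J}` for disjoint
ordered subsets, and `0` otherwise. -/
def sgn {N : ℕ} (I J : Finset (Fin N)) : ℤ :=
  if Disjoint I J then (-1)^(((I ×ˢ J).filter (fun p => p.2 < p.1)).card) else 0

/-- Ordered (increasing) product of the elements `f i`, `i ∈ J`. -/
def oprod {k N : ℕ} (J : Finset (Fin N)) (f : Fin N → Gr k N) : Gr k N :=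
  ((J.sort (· ≤ ·)).map f).prod

namespace Stmt19

variable {N : ℕ}

/-- Formal distributions in the two supervariables `Z, W`. -/
abbrev Dist2 (N : ℕ) : Type := ℤ → ℤ → Gr 2 N

/-- The generalized binomial coefficient `m(m-1)⋯(m-r+1)/r!` for `m ∈ ℤ`. -/
def genChoose (m : ℤ) (r : ℕ) : ℂ :=
  (∏ t ∈ Finset.range r, ((m : ℂ) - t)) / (r.factorial : ℂ)

/-- Coefficient of `z^a w^b` in `i_{z,w}(z-w)^m` (expansion in `|z| > |w|`). -/
def izwC (m : ℤ) (a b : ℤ) : ℂ :=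
  if 0 ≤ b ∧ a + b = m then (-1 : ℂ)^(b.toNat) * genChoose m b.toNat else 0

/-- Coefficient of `z^a w^b` in `i_{w,z}(z-w)^m` (expansion in `|w| > |z|`). -/
def iwzC (m : ℤ) (a b : ℤ) : ℂ :=
  if 0 ≤ a ∧ a + b = m then genChoose m a.toNat * (-1 : ℂ)^(b : ℤ) else 0

/-- `Σ_i θ^i ζ^i`. -/
def qq (N : ℕ) : Gr 2 N := ∑ i : Fin N, gv 0 i * gv 1 i

/-- `(θ-ζ)^J`. -/
def tK (J : Finset (Fin N)) : Gr 2 N := oprod J (fun i => gv 0 i - gv 1 i)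

/-- `i_{z,w}(Z-W)^{j|J}` with the `N_K` binomial `(z-w-Σθ^iζ^i)^j (θ-ζ)^J`. -/
def izwNK (N : ℕ) (j : ℤ) (J : Finset (Fin N)) : Dist2 N :=
  fun a b => ∑ r ∈ Finset.range (N + 1),
    ((-1 : ℂ)^r * genChoose j r * izwC (j - r) a b) • ((qq N)^r * tK J)

/-- `i_{w,z}(Z-W)^{j|J}`. -/
def iwzNK (N : ℕ) (j : ℤ) (J : Finset (Fin N)) : Dist2 N :=
  fun a b => ∑ r ∈ Finset.range (N + 1),
    ((-1 : ℂ)^r * genChoose j r * iwzC (j - r) a b) • ((qq N)^r * tK J)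

/-- The formal super delta function
`δ(Z,W) = (i_{z,w}-i_{w,z})((θ-ζ)^N/(z-w))`. -/
def deltaDist (N : ℕ) : Dist2 N :=
  fun a b => if a + b = -1 then tK Finset.univ else 0

/-- The `N_K` super derivative `D^i_W = ∂_{ζ^i} + ζ^i ∂_w` on distributions. -/
def DW (i : Fin N) (d : Dist2 N) : Dist2 N :=
  fun a b => dgv 1 i (d a b) + gv 1 i * (((b : ℂ) + 1) • d a (b + 1))

/-- `∂_w` on distributions. -/
def dw (d : Dist2 N) : Dist2 N := fun a b => ((b : ℂ) + 1) • d a (b + 1)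

/-- The divided-power derivative
`D_W^{(j|J)} = ((-1)^{|J|(|J|+1)/2}/j!) ∂_w^j D^{j_1}_W ⋯ D^{j_k}_W`. -/
def DWdiv (j : ℕ) (J : Finset (Fin N)) (d : Dist2 N) : Dist2 N :=
  ((-1 : ℂ)^(J.card * (J.card + 1) / 2) * (j.factorial : ℂ)⁻¹) •
    (dw^[j] ((J.sort (· ≤ ·)).foldr DW d))


-- ===== auxiliary layer =====
abbrev eaι : (Fin 2 × Fin N → ℂ) →ₗ[ℂ] Gr 2 N := ExteriorAlgebra.ι ℂ

lemma ι_anticomm (a b : Fin 2 × Fin N → ℂ) :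
    (eaι a) * eaι b = -(eaι b * eaι a) := by
  have h := ExteriorAlgebra.ι_sq_zero (R := ℂ) (a + b)
  rw [map_add, add_mul, mul_add, mul_add, ExteriorAlgebra.ι_sq_zero,
    ExteriorAlgebra.ι_sq_zero, zero_add, add_zero] at h
  exact eq_neg_of_add_eq_zero_left h

def vv (i : Fin N) : Fin 2 × Fin N → ℂ := Pi.single (0, i) 1 - Pi.single (1, i) 1

def tv (i : Fin N) : Gr 2 N := gv 0 i - gv 1 i

lemma tv_eq_ι (i : Fin N) : tv i = eaι (vv i) := by
  rw [tv, vv, map_sub]; rfl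

def qe (i : Fin N) : Gr 2 N := gv 0 i * gv 1 i

def tl (l : List (Fin N)) : Gr 2 N := (l.map tv).prod

@[simp] lemma tl_nil : tl ([] : List (Fin N)) = 1 := rfl
lemma tl_cons (a : Fin N) (l : List (Fin N)) : tl (a :: l) = tv a * tl l := by
  simp [tl]

lemma gv_anticomm (g h : Fin 2) (i k : Fin N) : gv g i * gv h k = -(gv h k * gv g i) :=
  ι_anticomm _ _

lemma gv_mul_self (g : Fin 2) (i : Fin N) : gv g i * gv g i = 0 :=
  ExteriorAlgebra.ι_sq_zero _

lemma gv_swap (g h : Fin 2) (i k : Fin N) (y : Gr 2 N) :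
    gv g i * (gv h k * y) = -(gv h k * (gv g i * y)) := by
  rw [← mul_assoc, gv_anticomm, neg_mul, mul_assoc]

lemma gv_gv (g : Fin 2) (i : Fin N) (y : Gr 2 N) : gv g i * (gv g i * y) = 0 := by
  rw [← mul_assoc, gv_mul_self, zero_mul]

lemma gv_tv_swap (g : Fin 2) (i a : Fin N) (y : Gr 2 N) :
    gv g i * (tv a * y) = -(tv a * (gv g i * y)) := by
  have h : gv g i * tv a = -(tv a * gv g i) := by rw [tv_eq_ι, gv]; exact ι_anticomm _ _
  rw [← mul_assoc, h, neg_mul, mul_assoc]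

lemma q_comm_ι (i : Fin N) (m : Fin 2 × Fin N → ℂ) :
    qe i * eaι m = eaι m * qe i := by
  rw [qe, gv, gv]
  rw [mul_assoc, ι_anticomm (Pi.single (1,i) 1) m, mul_neg, ← mul_assoc,
    ι_anticomm (Pi.single (0,i) 1) m, neg_mul, neg_neg, mul_assoc]

lemma q_comm_gv (i : Fin N) (g : Fin 2) (k : Fin N) : qe i * gv g k = gv g k * qe i :=
  q_comm_ι i _

lemma q_comm_tv (i k : Fin N) : qe i * tv k = tv k * qe i := by
  rw [tv_eq_ι]; exact q_comm_ι i _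

lemma tv_q_swap (a i : Fin N) (y : Gr 2 N) : tv a * (qe i * y) = qe i * (tv a * y) := by
  rw [← mul_assoc, ← q_comm_tv, mul_assoc]

lemma q_comm_q (i k : Fin N) : qe i * qe k = qe k * qe i := by
  calc qe i * qe k = qe i * gv 0 k * gv 1 k := by
        rw [show qe k = gv 0 k * gv 1 k from rfl, ← mul_assoc]
  _ = gv 0 k * gv 1 k * qe i := by rw [q_comm_gv, mul_assoc, q_comm_gv, ← mul_assoc]
  _ = qe k * qe i := rfl

lemma q_comm_tl (i : Fin N) (l : List (Fin N)) : qe i * tl l = tl l * qe i := by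
  induction l with
  | nil => simp
  | cons a t ih => rw [tl_cons, ← mul_assoc, q_comm_tv, mul_assoc, ih, ← mul_assoc]

lemma q_sq (i : Fin N) : qe i * qe i = 0 := by
  simp only [qe]
  rw [mul_assoc, gv_swap 1 0 i i, gv_mul_self]
  simp

lemma q_mul_tv_self (i : Fin N) : qe i * tv i = 0 := by
  rw [qe, tv, mul_assoc, mul_sub, gv_mul_self, gv_anticomm 1 0 i i, sub_zero, mul_neg,
    gv_gv, neg_zero]

lemma gv_mul_tv_self (g : Fin 2) (i : Fin N) : gv g i * tv i = -(qe i) := by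
  have h0 : gv 0 i * tv i = -(qe i) := by rw [tv, mul_sub, gv_mul_self, zero_sub, qe]
  have h1 : gv 1 i * tv i = -(qe i) := by
    rw [tv, mul_sub, gv_mul_self, sub_zero, gv_anticomm, qe]
  induction g using Fin.cases with
  | zero => exact h0
  | succ j =>
    have : j = 0 := Subsingleton.elim _ _
    subst this; exact h1

lemma q_mul_tl (i : Fin N) (l : List (Fin N)) (hi : i ∈ l) : qe i * tl l = 0 := by
  induction l with
  | nil => simp at hi
  | cons a t ih =>
    rw [tl_cons, ← mul_assoc]
    rcases eq_or_ne a i with rfl | hne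
    · rw [q_mul_tv_self, zero_mul]
    · rw [q_comm_tv, mul_assoc, ih (by simpa [hne.symm] using hi), mul_zero]

lemma gv_mul_tl (g : Fin 2) (i : Fin N) (l : List (Fin N)) (hi : i ∈ l) :
    gv g i * tl l = (-((-1:ℂ)^(l.idxOf i))) • (qe i * tl (l.erase i)) := by
  induction l with
  | nil => simp at hi
  | cons a t ih =>
    rcases eq_or_ne a i with rfl | hne
    · rw [tl_cons, ← mul_assoc, gv_mul_tv_self, List.erase_cons_head]
      simp [List.idxOf_cons_self, neg_mul]
    · have hit : i ∈ t := by simpa [hne.symm] using hi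
      rw [tl_cons, gv_tv_swap, ih hit, mul_smul_comm, tv_q_swap, ← tl_cons,
        ← List.erase_cons_tail (l := t) (by simp [hne]),
        List.idxOf_cons_ne _ (by simpa using hne), ← neg_smul]
      congr 1
      rw [pow_succ]
      ring

def qq' (N : ℕ) : Gr 2 N := ∑ i : Fin N, qe i

lemma dgv_ι_mul (i : Fin N) (m : Fin 2 × Fin N → ℂ) (x : Gr 2 N) :
    dgv 1 i (eaι m * x) = m (1,i) • x - eaι m * dgv 1 i x :=
  CliffordAlgebra.contractLeft_ι_mul _ _ _

lemma proj_single (g h : Fin 2) (i k : Fin N) :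
    Pi.single (M := fun _ : Fin 2 × Fin N => ℂ) (g,k) 1 (h,i) = if g = h ∧ k = i then 1 else 0 := by
  rw [Pi.single_apply]
  refine if_congr ?_ rfl rfl
  simp [Prod.ext_iff, eq_comm]

lemma dgv_gv_mul (i : Fin N) (g : Fin 2) (k : Fin N) (x : Gr 2 N) :
    dgv 1 i (gv g k * x) = (if g = 1 ∧ k = i then (1:ℂ) else 0) • x - gv g k * dgv 1 i x := by
  have := dgv_ι_mul i (Pi.single (g,k) (1:ℂ)) x
  rw [proj_single] at this
  exact this

lemma dgv_tv_mul (i a : Fin N) (x : Gr 2 N) :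
    dgv 1 i (tv a * x) = (-(if a = i then (1:ℂ) else 0)) • x - tv a * dgv 1 i x := by
  have hv : vv a (1,i) = -(if a = i then (1:ℂ) else 0) := by
    rw [vv, Pi.sub_apply, proj_single, proj_single]
    simp
  rw [tv_eq_ι, dgv_ι_mul, hv]

lemma dgv_one' (i : Fin N) : dgv (1 : Fin 2) i (1 : Gr 2 N) = 0 :=
  CliffordAlgebra.contractLeft_one _ _

lemma dgv_tl_not_mem (i : Fin N) (l : List (Fin N)) (hi : i ∉ l) : dgv 1 i (tl l) = 0 := by
  induction l with
  | nil => exact dgv_one' i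
  | cons a t ih =>
    rw [tl_cons, dgv_tv_mul, if_neg (by rintro rfl; exact hi (by simp)),
      ih (fun h => hi (by simp [h])), mul_zero, neg_zero, zero_smul, zero_sub, neg_zero]

lemma dgv_tl_mem (i : Fin N) (l : List (Fin N)) (hi : i ∈ l) (hn : l.Nodup) :
    dgv 1 i (tl l) = (-((-1:ℂ)^(l.idxOf i))) • tl (l.erase i) := by
  induction l with
  | nil => simp at hi
  | cons a t ih =>
    rcases eq_or_ne a i with rfl | hne
    · have hat : a ∉ t := (List.nodup_cons.mp hn).1
      rw [tl_cons, dgv_tv_mul, if_pos rfl, dgv_tl_not_mem a t hat, mul_zero, sub_zero,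
        List.erase_cons_head, List.idxOf_cons_self]
      simp
    · have hit : i ∈ t := by simpa [hne.symm] using hi
      rw [tl_cons, dgv_tv_mul, if_neg hne, neg_zero, zero_smul, zero_sub,
        ih hit (List.nodup_cons.mp hn).2, mul_smul_comm, ← tl_cons,
        ← List.erase_cons_tail (l := t) (by simp [hne]),
        List.idxOf_cons_ne _ (by simpa using hne), ← neg_smul]
      congr 1
      rw [pow_succ]
      ring

lemma qq'_comm (i : Fin N) (x : Gr 2 N) (hx : ∀ k, qe k * x = x * qe k) :
    qq' N * x = x * qq' N := by
  rw [qq', Finset.sum_mul, Finset.mul_sum]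
  exact Finset.sum_congr rfl fun k _ => hx k

lemma qq'_comm_gv (g : Fin 2) (i : Fin N) (y : Gr 2 N) :
    gv g i * (qq' N * y) = qq' N * (gv g i * y) := by
  rw [← mul_assoc, ← mul_assoc]
  congr 1
  rw [qq', Finset.sum_mul, Finset.mul_sum]
  exact Finset.sum_congr rfl fun k _ => (q_comm_gv k g i).symm

lemma qq'_pow_comm_gv (g : Fin 2) (i : Fin N) (r : ℕ) (y : Gr 2 N) :
    gv g i * (qq' N ^ r * y) = qq' N ^ r * (gv g i * y) := by
  induction r with
  | zero => simp
  | succ n ih =>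
    rw [pow_succ', mul_assoc, mul_assoc, qq'_comm_gv, ih]

lemma dgv_qq_mul (i : Fin N) (x : Gr 2 N) :
    dgv 1 i (qq' N * x) = -(gv 0 i * x) + qq' N * dgv 1 i x := by
  rw [qq', Finset.sum_mul, map_sum]
  have hterm : ∀ k : Fin N, dgv 1 i (qe k * x)
      = (if k = i then -(gv 0 k * x) else 0) + qe k * dgv 1 i x := by
    intro k
    rw [qe, mul_assoc, dgv_gv_mul i 0 k, if_neg (by rintro ⟨h, -⟩; exact absurd h (by decide)),
      zero_smul, zero_sub, dgv_gv_mul i 1 k, mul_sub, mul_smul_comm, neg_sub, ← mul_assoc]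
    have : (if (1:Fin 2) = 1 ∧ k = i then (1:ℂ) else 0) = (if k = i then (1:ℂ) else 0) := by
      simp
    rw [this]
    split_ifs with h
    · rw [one_smul, ← qe, sub_eq_neg_add]
    · rw [zero_smul, sub_zero, zero_add]
  rw [Finset.sum_congr rfl (fun k _ => hterm k), Finset.sum_add_distrib,
    Finset.sum_ite_eq' Finset.univ i (fun k => -(gv 0 k * x))]
  simp [Finset.mul_sum, qq', Finset.sum_mul]

lemma dgv_qq_pow_succ_mul (i : Fin N) (r : ℕ) (x : Gr 2 N) :
    dgv 1 i (qq' N ^ (r+1) * x)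
      = (-((r:ℂ)+1)) • (gv 0 i * (qq' N ^ r * x)) + qq' N ^ (r+1) * dgv 1 i x := by
  induction r with
  | zero => rw [pow_one, dgv_qq_mul]; simp
  | succ n ih =>
    rw [pow_succ' (qq' N) (n+1), mul_assoc, dgv_qq_mul, ih, mul_add, mul_smul_comm,
      ← qq'_comm_gv,
      show qq' N * (qq' N ^ n * x) = qq' N ^ (n+1) * x by rw [← mul_assoc, ← pow_succ'],
      show qq' N * (qq' N ^ (n+1) * dgv 1 i x) = qq' N ^ (n+2) * dgv 1 i x by
        rw [← mul_assoc, ← pow_succ'],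
      show qq' N * qq' N ^ (n+1) = qq' N ^ (n+2) from (pow_succ' _ _).symm]
    push_cast
    module

lemma sum_q_pow_zero (T : Finset (Fin N)) : (∑ k ∈ T, qe k) ^ (T.card + 1) = 0 := by
  induction T using Finset.induction_on with
  | empty => simp
  | insert a s ha ih =>
    have hc : Commute (qe a) (∑ k ∈ s, qe k) :=
      Commute.sum_right _ _ _ (fun k _ => q_comm_q a k)
    rw [Finset.sum_insert ha, Finset.card_insert_of_notMem ha, hc.add_pow]
    apply Finset.sum_eq_zero
    intro k hk
    match k with
    | 0 =>
      rw [pow_zero, one_mul, Nat.sub_zero, show s.card + 1 + 1 = (s.card+1)+1 from rfl,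
        pow_succ, ih, zero_mul, zero_mul]
    | 1 =>
      have h1 : s.card + 1 + 1 - 1 = s.card + 1 := by omega
      rw [pow_one, h1, ih, mul_zero, zero_mul]
    | (k+2) =>
      rw [show k + 2 = 2 + k by omega, pow_add, pow_two, q_sq, zero_mul, zero_mul, zero_mul]

lemma q_mul_qq_pow (i : Fin N) : qe i * qq' N ^ N = 0 := by
  have hiu : i ∈ (Finset.univ : Finset (Fin N)) := Finset.mem_univ i
  set P : Gr 2 N := ∑ k ∈ Finset.univ.erase i, qe k with hP
  have hsplit : qq' N = qe i + P := by
    rw [qq', hP, Finset.add_sum_erase _ _ hiu]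
  have hPN : P ^ N = 0 := by
    have hcard : (Finset.univ.erase i).card + 1 = N := by
      rw [Finset.card_erase_of_mem hiu, Finset.card_univ, Fintype.card_fin]
      have hN : 0 < N := i.pos
      omega
    have h := sum_q_pow_zero (Finset.univ.erase i)
    rwa [hcard] at h
  have hc : Commute (qe i) P := Commute.sum_right _ _ _ (fun k _ => q_comm_q i k)
  rw [hsplit, hc.add_pow, Finset.mul_sum]
  apply Finset.sum_eq_zero
  intro k hk
  match k with
  | 0 => simp [Nat.sub_zero, hPN]
  | (k+1) => simp [pow_succ', ← mul_assoc, q_sq]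

lemma commute_q_qq_pow (i : Fin N) (r : ℕ) : Commute (qe i) (qq' N ^ r) := by
  refine Commute.pow_right ?_ r
  exact Commute.sum_right _ _ _ (fun k _ => q_comm_q i k)

lemma qq_pow_mul_q_zero (i : Fin N) (y : Gr 2 N) : qq' N ^ N * (qe i * y) = 0 := by
  rw [← mul_assoc, ← (commute_q_qq_pow i N).eq, q_mul_qq_pow, zero_mul]

lemma sort_erase (S : Finset (Fin N)) (i : Fin N) :
    (S.erase i).sort (· ≤ ·) = (S.sort (· ≤ ·)).erase i := by
  refine List.Perm.eq_of_pairwise' (Finset.pairwise_sort _ _)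
    (List.Pairwise.sublist List.erase_sublist (Finset.pairwise_sort _ _)) ?_
  rw [← Multiset.coe_eq_coe, ← Multiset.coe_erase, Finset.sort_eq, Finset.sort_eq,
    Finset.erase_val]

lemma sorted_indexOf (l : List (Fin N)) (hl : List.Pairwise (· < ·) l) (i : Fin N) (hi : i ∈ l) :
    l.idxOf i = l.countP (fun x => decide (x < i)) := by
  induction l with
  | nil => simp at hi
  | cons b t ih =>
    rcases eq_or_ne b i with rfl | hne
    · rw [List.idxOf_cons_self, List.countP_cons_of_neg (by simp),
        List.countP_eq_zero.mpr]
      intro x hx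
      simp only [decide_eq_true_eq]
      exact fun hlt => lt_asymm hlt ((List.pairwise_cons.mp hl).1 x hx)
    · have hit : i ∈ t := by simpa [hne.symm] using hi
      have hbi : b < i := (List.pairwise_cons.mp hl).1 i hit
      rw [List.idxOf_cons_ne (a := i) _ hne, List.countP_cons_of_pos (by simpa),
        ih (List.pairwise_cons.mp hl).2 hit]

/-- index of `i` in the sorted list of `S` equals the number of smaller elements of `S`. -/
lemma indexOf_sort (S : Finset (Fin N)) (i : Fin N) (hi : i ∈ S) :
    (S.sort (· ≤ ·)).idxOf i = (S.filter (· < i)).card := by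
  rw [sorted_indexOf _ (Finset.sortedLT_sort S).pairwise i ((Finset.mem_sort _).mpr hi)]
  have h1 : (S.sort (· ≤ ·)).countP (fun x => decide (x < i))
      = Multiset.countP (fun x => decide (x < i)) S.val := by
    rw [← Finset.sort_eq S (· ≤ ·), Multiset.coe_countP]
    simp
  rw [h1, Multiset.countP_eq_card_filter, Finset.card_def, Finset.filter_val]
  congr 1
  apply Multiset.filter_congr
  intro x _
  simp

lemma fact_ne (r : ℕ) : ((r.factorial : ℂ)) ≠ 0 :=
  Nat.cast_ne_zero.mpr (Nat.factorial_ne_zero r)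

@[simp] lemma gc_zero (m : ℤ) : genChoose m 0 = 1 := by simp [genChoose]

lemma SL2 (m : ℤ) (r : ℕ) :
    ((r:ℂ)+1) * genChoose m (r+1) = ((m:ℂ) - (r:ℕ)) * genChoose m r := by
  rw [genChoose, genChoose, Finset.prod_range_succ, Nat.factorial_succ]
  have h1 := fact_ne r
  have h2 : (((r+1) * r.factorial : ℕ) : ℂ) ≠ 0 := fact_ne (r+1)
  push_cast at h2 ⊢
  field_simp

lemma SL3 (m : ℤ) (r : ℕ) :
    ((m:ℂ) - (r:ℕ)) * genChoose m r = (m:ℂ) * genChoose (m-1) r := by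
  rw [genChoose, genChoose]
  have h : (∏ t ∈ Finset.range r, ((m:ℂ) - t)) * ((m:ℂ) - r)
      = (m:ℂ) * ∏ t ∈ Finset.range r, (((m-1:ℤ):ℂ) - t) := by
    calc (∏ t ∈ Finset.range r, ((m:ℂ) - t)) * ((m:ℂ) - r)
        = ∏ t ∈ Finset.range (r+1), ((m:ℂ) - t) := (Finset.prod_range_succ _ r).symm
      _ = (∏ t ∈ Finset.range r, ((m:ℂ) - ((t:ℕ)+1:ℕ))) * ((m:ℂ) - (0:ℕ)) :=
          Finset.prod_range_succ' _ r
      _ = (m:ℂ) * ∏ t ∈ Finset.range r, (((m-1:ℤ):ℂ) - t) := by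
          push_cast
          rw [sub_zero, mul_comm]
          congr 1
          apply Finset.prod_congr rfl
          intro t _
          ring
  rw [← mul_div_assoc, ← mul_div_assoc]
  congr 1
  linear_combination h

lemma gc_neg_one (r : ℕ) : genChoose (-1) r = (-1:ℂ)^r := by
  rw [genChoose]
  have h : ∏ t ∈ Finset.range r, (((-1:ℤ):ℂ) - t) = (-1)^r * (r.factorial : ℂ) := by
    induction r with
    | zero => simp
    | succ n ih => rw [Finset.prod_range_succ, ih, Nat.factorial_succ, pow_succ]; push_cast; ring
  rw [h, mul_div_assoc, div_self (fact_ne r), mul_one]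

lemma neg_one_zpow_succ (b : ℤ) : (-1:ℂ)^(b+1) = -((-1:ℂ)^b) := by
  rw [zpow_add_one₀ (by norm_num : (-1:ℂ) ≠ 0)]
  ring

lemma neg_one_pow_inv (k : ℕ) : ((-1:ℂ)^k)⁻¹ = (-1:ℂ)^k := by
  refine inv_eq_of_mul_eq_one_right ?_
  rw [← mul_pow]
  norm_num

lemma neg_one_zpow_neg_natCast (k : ℕ) : (-1:ℂ)^(-(k:ℤ)) = (-1:ℂ)^k := by
  rw [zpow_neg, zpow_natCast, neg_one_pow_inv]

lemma dl1_izw (m a b : ℤ) : ((b:ℂ)+1) * izwC m a (b+1) = -(m:ℂ) * izwC (m-1) a b := by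
  rw [izwC, izwC]
  split_ifs with h1 h2 h2
  · have htn : (b+1).toNat = b.toNat + 1 := by omega
    have hb : 0 ≤ b := h2.1
    rw [htn, pow_succ]
    have hb' : ((b.toNat : ℕ) : ℂ) = (b:ℂ) := by
      rw [← Int.cast_natCast, Int.toNat_of_nonneg hb]
    have key1 := SL2 m b.toNat
    have key2 := SL3 m b.toNat
    rw [hb'] at key1
    linear_combination ((-1:ℂ)^b.toNat * (-1)) * key1 + (-((-1:ℂ)^b.toNat)) * key2
      - (genChoose m b.toNat * (-1:ℂ)^b.toNat) * hb'
  · have hb : b = -1 := by omega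
    subst hb
    norm_num
  · exact absurd (show 0 ≤ b + 1 ∧ a + (b+1) = m by omega) h1
  · simp

lemma dl1_iwz (m a b : ℤ) : ((b:ℂ)+1) * iwzC m a (b+1) = -(m:ℂ) * iwzC (m-1) a b := by
  rw [iwzC, iwzC]
  split_ifs with h1 h2 h2
  · obtain ⟨ha, hab⟩ := h2
    have ha' : ((a.toNat : ℕ) : ℂ) = (a:ℂ) := by
      rw [← Int.cast_natCast, Int.toNat_of_nonneg ha]
    have hm : ((a + b + 1 : ℤ) : ℂ) = ((m:ℤ):ℂ) := by rw [show a + b + 1 = m by omega]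
    push_cast at hm
    have hbm : (b:ℂ) + 1 = (m:ℂ) - ((a.toNat:ℕ):ℂ) := by rw [ha']; linear_combination hm
    have key := SL3 m a.toNat
    rw [neg_one_zpow_succ]
    linear_combination (-((-1:ℂ)^(b:ℤ))) * key - (genChoose m a.toNat * (-1:ℂ)^(b:ℤ)) * hbm
  · exact absurd (show 0 ≤ a ∧ a + b = m - 1 by omega) h2
  · exact absurd (show 0 ≤ a ∧ a + (b+1) = m by omega) h1
  · simp

lemma delta_c (a b : ℤ) :
    izwC (-1) a b - iwzC (-1) a b = if a + b = -1 then 1 else 0 := by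
  rw [izwC, iwzC]
  by_cases hab : a + b = -1
  · rw [if_pos hab]
    by_cases hb : 0 ≤ b
    · rw [if_pos ⟨hb, hab⟩, if_neg (by omega), gc_neg_one, ← mul_pow]
      norm_num
    · rw [if_neg (by omega), if_pos ⟨by omega, hab⟩, gc_neg_one]
      have hbeq : b = -((-b).toNat : ℤ) := by omega
      rw [hbeq, neg_one_zpow_neg_natCast]
      have h2 : (-b).toNat = a.toNat + 1 := by omega
      have hsq : (-1:ℂ)^a.toNat * (-1:ℂ)^a.toNat = 1 := by
        rw [← mul_pow]; norm_num
      rw [h2, pow_succ]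
      linear_combination hsq
  · rw [if_neg (by omega), if_neg (by omega), if_neg hab, sub_zero]


lemma qq_eq : qq N = qq' N := rfl

lemma tK_eq (S : Finset (Fin N)) : tK S = tl (S.sort (· ≤ ·)) := rfl

/-- scalar coefficient of `qq^r tK S` in `(i_{z,w}-i_{w,z})(Z-W)^{m|S}` -/
def coefC (m a b : ℤ) (r : ℕ) : ℂ :=
  (-1:ℂ)^r * genChoose m r * (izwC (m - r) a b - iwzC (m - r) a b)

def dcoefC (m a b : ℤ) (r : ℕ) : ℂ :=
  (-1:ℂ)^r * genChoose m r * (-(((m - r : ℤ)):ℂ)) * (izwC (m - r - 1) a b - iwzC (m - r - 1) a b)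

/-- The difference distribution `(i_{z,w} - i_{w,z})(Z-W)^{m|S}`. -/
def Fm (m : ℤ) (S : Finset (Fin N)) : Dist2 N := fun a b =>
  ∑ r ∈ Finset.range (N + 1), coefC m a b r • ((qq N)^r * tK S)

lemma izw_sub_iwz (m : ℤ) (S : Finset (Fin N)) (a b : ℤ) :
    izwNK N m S a b - iwzNK N m S a b = Fm m S a b := by
  rw [izwNK, iwzNK, Fm, ← Finset.sum_sub_distrib]
  apply Finset.sum_congr rfl
  intro r _
  rw [← sub_smul, coefC]
  congr 1
  ring

lemma SL1 (m a b : ℤ) : ((b:ℂ)+1) * (izwC m a (b+1) - iwzC m a (b+1))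
    = -(m:ℂ) * (izwC (m-1) a b - iwzC (m-1) a b) := by
  have h1 := dl1_izw m a b
  have h2 := dl1_iwz m a b
  linear_combination h1 - h2

lemma SL1' (m a b : ℤ) (r : ℕ) :
    ((b:ℂ)+1) * coefC m a (b+1) r = dcoefC m a b r := by
  rw [coefC, dcoefC]
  have h := SL1 (m - (r:ℕ)) a b
  linear_combination ((-1:ℂ)^r * genChoose m r) * h

lemma cancelC (m a b : ℤ) (r : ℕ) :
    coefC m a b (r+1) * (-((r:ℂ)+1)) + dcoefC m a b r = 0 := by
  rw [coefC, dcoefC]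
  have hkey := SL2 m r
  have e2 : (m - ((r+1:ℕ):ℤ)) = m - (r:ℕ) - 1 := by push_cast; ring
  have e3 : ((m - (r:ℕ) : ℤ) : ℂ) = (m:ℂ) - ((r:ℕ):ℂ) := by push_cast; ring
  rw [e2, e3, pow_succ]
  linear_combination (((-1:ℂ)^r * (izwC (m - (r:ℕ) - 1) a b - iwzC (m - (r:ℕ) - 1) a b))) * hkey

lemma qq_tK_univ : qq N * tK (Finset.univ : Finset (Fin N)) = 0 := by
  rw [qq_eq, tK_eq, qq', Finset.sum_mul]
  exact Finset.sum_eq_zero fun k _ =>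
    q_mul_tl k _ ((Finset.mem_sort _).mpr (Finset.mem_univ k))

lemma delta_eq : deltaDist N = Fm (-1) Finset.univ := by
  funext a b
  rw [Fm, Finset.sum_range_succ']
  have hz : ∀ r ∈ Finset.range N,
      coefC (-1) a b (r+1) • ((qq N)^(r+1) * tK Finset.univ) = 0 := by
    intro r _
    rw [pow_succ (qq N) r, mul_assoc, qq_tK_univ, mul_zero, smul_zero]
  rw [Finset.sum_congr rfl hz, Finset.sum_const_zero, zero_add]
  have hco : coefC (-1) a b 0 = if a + b = -1 then 1 else 0 := by
    rw [coefC]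
    have e1 : ((-1:ℤ) - ((0:ℕ):ℤ)) = -1 := by norm_num
    rw [e1, delta_c]
    simp
  rw [hco, deltaDist]
  split_ifs with h
  · simp
  · simp

lemma dw_Fm (m : ℤ) (S : Finset (Fin N)) : dw (Fm m S) = (-(m:ℂ)) • Fm (m-1) S := by
  funext a b
  show ((b:ℂ)+1) • Fm m S a (b+1) = (-(m:ℂ)) • Fm (m-1) S a b
  rw [Fm, Fm, Finset.smul_sum, Finset.smul_sum]
  apply Finset.sum_congr rfl
  intro r _
  rw [smul_smul, smul_smul, SL1', dcoefC, coefC]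
  congr 1
  have e3 : ((m - (r:ℕ) : ℤ) : ℂ) = (m:ℂ) - ((r:ℕ):ℂ) := by push_cast; ring
  have e1 : (m - (r:ℕ) - 1 : ℤ) = (m - 1 - (r:ℕ) : ℤ) := by ring
  have hkey := SL3 m r
  rw [e1, e3]
  linear_combination (-((-1:ℂ)^r * (izwC (m - 1 - (r:ℕ)) a b - iwzC (m - 1 - (r:ℕ)) a b))) * hkey

lemma dw_smul (c : ℂ) (f : Dist2 N) : dw (c • f) = c • dw f := by
  funext a b
  show ((b:ℂ)+1) • (c • f) a (b+1) = c • (((b:ℂ)+1) • f a (b+1))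
  rw [Pi.smul_apply, Pi.smul_apply, smul_comm]

lemma dw_iter_smul (j : ℕ) (c : ℂ) (f : Dist2 N) : dw^[j] (c • f) = c • dw^[j] f := by
  induction j with
  | zero => simp
  | succ n ih =>
    rw [Function.iterate_succ_apply', ih, dw_smul, ← Function.iterate_succ_apply' dw n f]

lemma dw_iter_Fm (j : ℕ) (S : Finset (Fin N)) :
    dw^[j] (Fm (-1) S) = (j.factorial : ℂ) • Fm (-1 - j) S := by
  induction j with
  | zero => simp
  | succ n ih =>
    rw [Function.iterate_succ_apply', ih, dw_smul, dw_Fm]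
    rw [smul_smul, Nat.factorial_succ]
    have e1 : ((-1:ℤ) - (n:ℕ)) - 1 = (-1:ℤ) - ((n+1:ℕ):ℤ) := by push_cast; ring
    rw [e1]
    congr 1
    push_cast
    ring

lemma DW_smul (i : Fin N) (c : ℂ) (f : Dist2 N) : DW i (c • f) = c • DW i f := by
  funext a b
  show dgv 1 i ((c • f) a b) + gv 1 i * (((b:ℂ)+1) • (c • f) a (b+1))
      = c • (dgv 1 i (f a b) + gv 1 i * (((b:ℂ)+1) • f a (b+1)))
  simp only [Pi.smul_apply, map_smul, smul_add]
  congr 1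
  rw [smul_comm ((b:ℂ)+1) c, mul_smul_comm]

lemma dgv_qq_pow_mul (i : Fin N) (r : ℕ) (y : Gr 2 N) :
    dgv 1 i (qq' N ^ r * y)
      = (-(r:ℂ)) • (gv 0 i * (qq' N ^ (r-1) * y)) + qq' N ^ r * dgv 1 i y := by
  match r with
  | 0 => simp
  | (n+1) =>
    rw [dgv_qq_pow_succ_mul]
    push_cast
    simp

set_option maxHeartbeats 1000000 in
/-- The key commutation: applying `D^i_W` to `(i_{z,w}-i_{w,z})(Z-W)^{m|S}` for `i ∈ S`. -/
lemma DW_Fm (m : ℤ) (S : Finset (Fin N)) (i : Fin N) (hi : i ∈ S) :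
    DW i (Fm m S) = (-((-1:ℂ)^((S.filter (· < i)).card))) • Fm m (S.erase i) := by
  funext a b
  have hmem : i ∈ S.sort (· ≤ ·) := (Finset.mem_sort _).mpr hi
  have hnd : (S.sort (· ≤ ·)).Nodup := Finset.sort_nodup _ _
  have hidx := indexOf_sort S i hi
  set e : ℂ := -((-1:ℂ)^((S.filter (· < i)).card)) with he
  set l : List (Fin N) := S.sort (· ≤ ·) with hl
  set L : List (Fin N) := l.erase i with hL
  have htKS : tK S = tl l := tK_eq S
  have htKS' : tK (S.erase i) = tl L := by rw [tK_eq, sort_erase]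
  have hdtl : dgv 1 i (tl l) = e • tl L := by
    rw [dgv_tl_mem i l hmem hnd, hidx]
  have hgv0 : ∀ r : ℕ, gv 0 i * (qq' N ^ r * tl l) = e • (qq' N ^ r * (qe i * tl L)) := by
    intro r
    rw [qq'_pow_comm_gv, gv_mul_tl 0 i l hmem, hidx, mul_smul_comm]
  have hgv1 : ∀ r : ℕ, gv 1 i * (qq' N ^ r * tl l) = e • (qq' N ^ r * (qe i * tl L)) := by
    intro r
    rw [qq'_pow_comm_gv, gv_mul_tl 1 i l hmem, hidx, mul_smul_comm]
  have hterm1 : ∀ r : ℕ, dgv 1 i (coefC m a b r • (qq N ^ r * tK S))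
      = (coefC m a b r * (-(r:ℂ)) * e) • (qq' N ^ (r-1) * (qe i * tl L))
        + e • (coefC m a b r • (qq N ^ r * tK (S.erase i))) := by
    intro r
    rw [map_smul, qq_eq, htKS, htKS', dgv_qq_pow_mul, hdtl, hgv0 (r-1), mul_smul_comm]
    module
  have hterm2 : ∀ r : ℕ, gv 1 i * ((((b:ℂ)+1) * coefC m a (b+1) r) • (qq N ^ r * tK S))
      = (dcoefC m a b r * e) • (qq' N ^ r * (qe i * tl L)) := by
    intro r
    rw [SL1', qq_eq, htKS, mul_smul_comm, hgv1 r, smul_smul]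
  have hP1 : dgv 1 i (Fm m S a b)
      = (∑ r ∈ Finset.range (N+1),
          (coefC m a b r * (-(r:ℂ)) * e) • (qq' N ^ (r-1) * (qe i * tl L)))
        + e • Fm m (S.erase i) a b := by
    rw [Fm, map_sum, Fm, Finset.smul_sum, ← Finset.sum_add_distrib]
    exact Finset.sum_congr rfl (fun r _ => hterm1 r)
  have hP2 : gv 1 i * (((b:ℂ)+1) • Fm m S a (b+1))
      = ∑ r ∈ Finset.range (N+1), (dcoefC m a b r * e) • (qq' N ^ r * (qe i * tl L)) := by
    rw [Fm, Finset.smul_sum, Finset.mul_sum]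
    refine Finset.sum_congr rfl (fun r _ => ?_)
    rw [smul_smul]
    exact hterm2 r
  show dgv 1 i (Fm m S a b) + gv 1 i * (((b:ℂ)+1) • Fm m S a (b+1)) = _
  rw [hP1, hP2, Pi.smul_apply]
  have hzero : (∑ r ∈ Finset.range (N+1),
        (coefC m a b r * (-(r:ℂ)) * e) • (qq' N ^ (r-1) * (qe i * tl L)))
      + (∑ r ∈ Finset.range (N+1), (dcoefC m a b r * e) • (qq' N ^ r * (qe i * tl L))) = 0 := by
    rw [Finset.sum_range_succ'
        (fun r => (coefC m a b r * (-(r:ℂ)) * e) • (qq' N ^ (r-1) * (qe i * tl L))),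
      Finset.sum_range_succ (fun r => (dcoefC m a b r * e) • (qq' N ^ r * (qe i * tl L)))]
    have hYN : qq' N ^ N * (qe i * tl L) = 0 := qq_pow_mul_q_zero i (tl L)
    have h00 : (coefC m a b 0 * (-((0:ℕ):ℂ)) * e) • (qq' N ^ (0-1) * (qe i * tl L)) = 0 := by
      norm_num
    rw [hYN, smul_zero, add_zero, h00, add_zero, ← Finset.sum_add_distrib]
    apply Finset.sum_eq_zero
    intro r _
    have hs : (r : ℕ) + 1 - 1 = r := by omega
    rw [hs, ← add_smul]
    have hcan := cancelC m a b r
    have hcoef : coefC m a b (r+1) * (-(((r+1:ℕ)):ℂ)) * e + dcoefC m a b r * e = 0 := by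
      push_cast
      linear_combination e * hcan
    rw [hcoef, zero_smul]
  have hre : (∑ r ∈ Finset.range (N+1),
        (coefC m a b r * (-(r:ℂ)) * e) • (qq' N ^ (r-1) * (qe i * tl L)))
        + e • Fm m (S.erase i) a b
        + (∑ r ∈ Finset.range (N+1), (dcoefC m a b r * e) • (qq' N ^ r * (qe i * tl L)))
      = ((∑ r ∈ Finset.range (N+1),
          (coefC m a b r * (-(r:ℂ)) * e) • (qq' N ^ (r-1) * (qe i * tl L)))
        + (∑ r ∈ Finset.range (N+1), (dcoefC m a b r * e) • (qq' N ^ r * (qe i * tl L))))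
        + e • Fm m (S.erase i) a b := by
    abel
  rw [hre, hzero, zero_add]
  rfl

lemma filter_lt_min (S : Finset (Fin N)) (a : Fin N) (h : ∀ x : Fin N, x < a → x ∈ S) :
    S.filter (· < a) = Finset.Iio a := by
  ext x
  simp only [Finset.mem_filter, Finset.mem_Iio]
  exact ⟨fun hx => hx.2, fun hx => ⟨h x hx, hx⟩⟩

lemma compl_erase_erase (J : Finset (Fin N)) (a : Fin N) (haJ : a ∈ J) :
    ((J.erase a)ᶜ).erase a = Jᶜ := by
  rw [Finset.compl_erase, Finset.erase_insert]
  simp [haJ]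

lemma master (J : Finset (Fin N)) :
    (J.sort (· ≤ ·)).foldr DW (deltaDist N)
      = ((-1:ℂ)^(J.card + ∑ x ∈ J, (x:ℕ))) • Fm (-1) Jᶜ := by
  induction J using Finset.strongInduction with
  | _ J ih =>
    rcases J.eq_empty_or_nonempty with rfl | hne
    · rw [Finset.sort_empty, List.foldr_nil, delta_eq]
      simp
    · have haJ : (J.min' hne) ∈ J := J.min'_mem hne
      set a := J.min' hne with ha
      set J' := J.erase a with hJ'
      have hsub : J' ⊂ J := Finset.erase_ssubset haJ
      have hins : J = insert a J' := by rw [hJ', Finset.insert_erase haJ]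
      have hsort : J.sort (· ≤ ·) = a :: J'.sort (· ≤ ·) := by
        conv_lhs => rw [hins]
        have h1 : ∀ x ∈ J', a ≤ x := by
          intro x hx
          exact J.min'_le x (Finset.mem_of_mem_erase hx)
        exact Finset.sort_insert (fun x1 x2 => x1 ≤ x2) h1 (Finset.notMem_erase a J)
      have hmemb : a ∈ J'ᶜ := Finset.mem_compl.mpr (Finset.notMem_erase a J)
      have hfilter : (J'ᶜ.filter (· < a)).card = (a:ℕ) := by
        rw [filter_lt_min _ a (fun x hx => Finset.mem_compl.mpr
          (fun hmem => absurd (J.min'_le x (Finset.mem_of_mem_erase hmem)) (not_le.mpr hx))),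
          Fin.card_Iio]
      rw [hsort, List.foldr_cons, ih J' hsub, DW_smul, DW_Fm (-1) J'ᶜ a hmemb, hfilter,
        compl_erase_erase J a haJ, smul_smul]
      congr 1
      have hcard : J'.card + 1 = J.card := Finset.card_erase_add_one haJ
      have hsum : (a:ℕ) + ∑ x ∈ J', (x:ℕ) = ∑ x ∈ J, (x:ℕ) :=
        Finset.add_sum_erase J (fun x => (x:ℕ)) haJ
      rw [← hcard, ← hsum, pow_add, pow_add, pow_add, pow_succ]
      ring

lemma A_sum (J K : Finset (Fin N)) :
    ((J ×ˢ K).filter (fun p => p.2 < p.1)).card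
      = ∑ x ∈ J, (K.filter (· < x)).card := by
  rw [Finset.card_filter, Finset.sum_product]
  apply Finset.sum_congr rfl
  intro x _
  rw [Finset.card_filter]

lemma npow_neg_one_eq (x y : ℕ) (h : x % 2 = y % 2) : (-1:ℂ)^x = (-1:ℂ)^y := by
  rw [← Nat.div_add_mod x 2, ← Nat.div_add_mod y 2, pow_add, pow_add, pow_mul, pow_mul,
    neg_one_sq, one_pow, one_pow, h]

lemma parity (J : Finset (Fin N)) :
    (((J ×ˢ Jᶜ).filter (fun p => p.2 < p.1)).card + J.card * (J.card + 1) / 2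
      + J.card + ∑ x ∈ J, (x:ℕ)) % 2 = 0 := by
  induction J using Finset.strongInduction with
  | _ J ih =>
    rcases J.eq_empty_or_nonempty with rfl | hne
    · simp
    · have haJ : (J.min' hne) ∈ J := J.min'_mem hne
      set a := J.min' hne with ha
      set J' := J.erase a with hJ'
      have hsub : J' ⊂ J := Finset.erase_ssubset haJ
      have hfa : (Jᶜ.filter (· < a)).card = (a:ℕ) := by
        rw [filter_lt_min _ a (fun x hx => Finset.mem_compl.mpr
          (fun hmem => absurd (J.min'_le x hmem) (not_le.mpr hx))), Fin.card_Iio]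
      have hstep : ∀ x ∈ J', (J'ᶜ.filter (· < x)).card = (Jᶜ.filter (· < x)).card + 1 := by
        intro x hx
        have hax : a < x := lt_of_le_of_ne (J.min'_le x (Finset.mem_of_mem_erase hx))
          (fun h => (Finset.mem_erase.mp hx).1 h.symm)
        rw [hJ', Finset.compl_erase, Finset.filter_insert, if_pos hax,
          Finset.card_insert_of_notMem (by simp [haJ])]
      have hA : ((J ×ˢ Jᶜ).filter (fun p => p.2 < p.1)).card + J'.card
          = (a:ℕ) + ((J' ×ˢ J'ᶜ).filter (fun p => p.2 < p.1)).card := by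
        rw [A_sum, A_sum, ← Finset.add_sum_erase J (fun x => (Jᶜ.filter (· < x)).card) haJ,
          ← hJ', hfa, Finset.sum_congr rfl hstep, Finset.sum_add_distrib, Finset.sum_const,
          smul_eq_mul, mul_one]
        omega
      have hcard : J'.card + 1 = J.card := Finset.card_erase_add_one haJ
      have hsum : (a:ℕ) + ∑ x ∈ J', (x:ℕ) = ∑ x ∈ J, (x:ℕ) :=
        Finset.add_sum_erase J (fun x => (x:ℕ)) haJ
      have hdvd : 2 ∣ J'.card * (J'.card + 1) := (Nat.even_mul_succ_self J'.card).two_dvd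
      have hmul : J.card * (J.card + 1) = J'.card * (J'.card + 1) + 2 * (J'.card + 1) := by
        rw [← hcard]; ring
      have ihp := ih J' hsub
      omega

lemma sign_id (J : Finset (Fin N)) :
    ((sgn J Jᶜ : ℤ) : ℂ)
      = (-1:ℂ)^(J.card * (J.card + 1) / 2) * (-1:ℂ)^(J.card + ∑ x ∈ J, (x:ℕ)) := by
  rw [sgn, if_pos (disjoint_compl_right)]
  push_cast
  rw [← pow_add]
  exact npow_neg_one_eq _ _ (by have := parity J; omega)

/-- In the `N_K = N` setting,
`D_W^{(j|J)} δ(Z,W) = σ(J) (i_{z,w} - i_{w,z}) (Z-W)^{-1-j|N∖J}`. -/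
theorem stmt19 (N : ℕ) (j : ℕ) (J : Finset (Fin N)) :
    DWdiv j J (deltaDist N)
      = ((sgn J Jᶜ : ℂ)) •
          (fun a b => izwNK N (-1 - (j : ℤ)) Jᶜ a b - iwzNK N (-1 - (j : ℤ)) Jᶜ a b) := by
  have hRHS : (fun a b => izwNK N (-1 - (j:ℤ)) Jᶜ a b - iwzNK N (-1 - (j:ℤ)) Jᶜ a b)
      = Fm (-1 - (j:ℤ)) Jᶜ := by
    funext a b
    exact izw_sub_iwz _ _ _ _
  rw [DWdiv, master, dw_iter_smul, dw_iter_Fm, hRHS, smul_smul, smul_smul, sign_id]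
  congr 1
  field_simp
  rw [div_self (fact_ne j)]

end Stmt19
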